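/- Under the setup and Assumptions A4 and A5, let μ₀ : ℝ^p × ℝ^q → ℝ be any measurable function with μ₀(L*, L) square-integrable under μ, and let ω₁ : ℝ^p → ℝ and ν : ℝ^p → ℝ be measurable functions such that, under μ(·|{A = 1, R = 1}), ω₁(L*) is a version of E[E | σ(L*)] and ν(L*) is a version of E[E·(Y − μ₀(L*, L)) | σ(L*)]. Then E[A·R·E/η₁(L*)] = E[A·ω₁(L*)] and E[(A·R·E/η₁(L*))·(Y − μ₀(L*, L))] = E[A·ν(L*)]. -/

import Mathlib

open MeasureTheory ProbabilityTheory
open scoped ENNReal ProbabilityTheory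

set_option linter.unusedVariables false
set_option maxHeartbeats 1000000

/-- Reparametrization of α(P) and β(P) through the nested nuisance functions
ω₁ and ν conditioned on L* among treated complete cases. -/
theorem stmt_7
    {Ω : Type*} [𝓕 : MeasurableSpace Ω] [StandardBorelSpace Ω] [Nonempty Ω]
    (μ : Measure Ω) [IsProbabilityMeasure μ]
    {p q : ℕ}
    (Lstar : Ω → Fin p → ℝ) (L : Ω → Fin q → ℝ) (A R Y : Ω → ℝ)
    (hLstar : Measurable Lstar) (hL : Measurable L)
    (hA : Measurable A) (hR : Measurable R) (hY : Measurable Y)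
    (hA01 : ∀ ω, A ω = 0 ∨ A ω = 1) (hR01 : ∀ ω, R ω = 0 ∨ R ω = 1)
    (hY2 : MemLp Y 2 μ)
    (g : (Fin q → ℝ) → ℝ → ℝ) (hg : Measurable (Function.uncurry g))
    (hg01 : ∀ x a, g x a = 0 ∨ g x a = 1)
    -- Assumption A4 (MAR): R ⫫ (L, Y) | σ(L*, A)
    (hMAR : CondIndepFun (MeasurableSpace.comap (fun ω => (Lstar ω, A ω)) inferInstance)
      ((hLstar.prodMk hA).comap_le) R (fun ω => (L ω, Y ω)) μ)
    -- Assumption A5 (missingness positivity)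
    (η : (Fin p → ℝ) → ℝ → ℝ) (hη : Measurable (Function.uncurry η))
    (hηver : (fun ω => η (Lstar ω) (A ω)) =ᵐ[μ]
      μ[R|MeasurableSpace.comap (fun ω => (Lstar ω, A ω)) inferInstance])
    (ε₀ : ℝ) (hε₀ : 0 < ε₀)
    (hηpos : ∀ᵐ ω ∂μ, ε₀ ≤ η (Lstar ω) 0 ∧ ε₀ ≤ η (Lstar ω) 1)
    (hA1R : 0 < μ {ω | A ω = 1 ∧ R ω = 1})
    (μ₀ : (Fin p → ℝ) → (Fin q → ℝ) → ℝ) (hμ₀ : Measurable (Function.uncurry μ₀))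
    (hμ₀2 : MemLp (fun ω => μ₀ (Lstar ω) (L ω)) 2 μ)
    (ω₁ ν : (Fin p → ℝ) → ℝ)
    (hω₁ : Measurable ω₁) (hν : Measurable ν)
    (hω₁ver : (fun ω => ω₁ (Lstar ω)) =ᵐ[μ[|{ω | A ω = 1 ∧ R ω = 1}]]
      (μ[|{ω | A ω = 1 ∧ R ω = 1}])[(fun ω => g (L ω) (A ω))|MeasurableSpace.comap
          Lstar inferInstance])
    (hνver : (fun ω => ν (Lstar ω)) =ᵐ[μ[|{ω | A ω = 1 ∧ R ω = 1}]]
      (μ[|{ω | A ω = 1 ∧ R ω = 1}])[(fun ω => g (L ω) (A ω) * (Y ω - μ₀ (Lstar ω) (L ω)))|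
        MeasurableSpace.comap Lstar inferInstance]) :
    (∫ ω, A ω * R ω * g (L ω) (A ω) / η (Lstar ω) 1 ∂μ
        = ∫ ω, A ω * ω₁ (Lstar ω) ∂μ) ∧
    (∫ ω, (A ω * R ω * g (L ω) (A ω) / η (Lstar ω) 1) * (Y ω - μ₀ (Lstar ω) (L ω)) ∂μ
        = ∫ ω, A ω * ν (Lstar ω) ∂μ) := by
  classical
  have hm_le : MeasurableSpace.comap (fun ω => (Lstar ω, A ω)) inferInstance ≤ 𝓕 :=
    (hLstar.prodMk hA).comap_le
  have hmstar_le : MeasurableSpace.comap Lstar inferInstance ≤ 𝓕 := hLstar.comap_le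
  set S : Set Ω := {ω | A ω = 1 ∧ R ω = 1} with hSdef
  have hS : MeasurableSet[𝓕] S :=
    (hA (measurableSet_singleton 1)).inter (hR (measurableSet_singleton 1))
  have hc0 : μ S ≠ 0 := hA1R.ne'
  have hcT : μ S ≠ ⊤ := measure_ne_top μ S
  haveI : IsProbabilityMeasure (μ[|S]) := cond_isProbabilityMeasure hc0
  have hcond_def : μ[|S] = (μ S)⁻¹ • μ.restrict S := rfl
  -- measurability facts
  have hpairm : Measurable[MeasurableSpace.comap (fun ω => (Lstar ω, A ω)) inferInstance] (fun ω => (Lstar ω, A ω)) := Measurable.of_comap_le le_rfl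
  have hAm : Measurable[MeasurableSpace.comap (fun ω => (Lstar ω, A ω)) inferInstance] A := measurable_snd.comp hpairm
  have hLm : Measurable[MeasurableSpace.comap (fun ω => (Lstar ω, A ω)) inferInstance] Lstar := measurable_fst.comp hpairm
  have hLms : Measurable[MeasurableSpace.comap Lstar inferInstance] Lstar := Measurable.of_comap_le le_rfl
  have hη1meas : Measurable (fun x : Fin p → ℝ => η x 1) :=
    hη.comp (measurable_id.prodMk measurable_const)
  have hgmeas : Measurable[𝓕] (fun ω => g (L ω) (A ω)) := hg.comp (hL.prodMk hA)
  have hDmeas : Measurable[𝓕] (fun ω => Y ω - μ₀ (Lstar ω) (L ω)) :=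
    hY.sub (hμ₀.comp (hLstar.prodMk hL))
  -- basic integrability / bounds
  have hRint : Integrable R μ := by
    refine Integrable.mono' (integrable_const 1) hR.aestronglyMeasurable ?_
    refine Filter.Eventually.of_forall fun ω => ?_
    rcases hR01 ω with h | h <;> simp [h]
  have hη1 : ∀ᵐ ω ∂μ, ε₀ ≤ η (Lstar ω) 1 := hηpos.mono fun ω h => h.2
  have habs : (μ[|S]) ≪ μ := cond_absolutelyContinuous
  have hη1c : ∀ᵐ ω ∂μ[|S], ε₀ ≤ η (Lstar ω) 1 := hη1.filter_mono habs.ae_le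
  have hgbd : ∀ ω, |g (L ω) (A ω)| ≤ 1 := fun ω => by
    rcases hg01 (L ω) (A ω) with h | h <;> simp [h]
  -- ω₁ is a.e. bounded by 1 under the conditional measure
  have hω₁bd : ∀ᵐ ω ∂μ[|S], |ω₁ (Lstar ω)| ≤ 1 := by
    have hce := ae_bdd_condExp_of_ae_bdd (μ := μ[|S]) (m := MeasurableSpace.comap Lstar inferInstance) (R := 1)
      (f := fun ω => g (L ω) (A ω))
      (Filter.Eventually.of_forall fun ω => by simpa using hgbd ω)
    filter_upwards [hω₁ver, hce] with ω h1 h2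
    rw [h1]
    simpa using h2
  -- transfer to μ-a.e. on S
  have hω₁S : ∀ᵐ ω ∂μ, ω ∈ S → |ω₁ (Lstar ω)| ≤ 1 := by
    have h0 : (μ[|S]) {ω | ¬ |ω₁ (Lstar ω)| ≤ 1} = 0 := ae_iff.mp hω₁bd
    rw [cond_apply hS] at h0
    have hnull : μ (S ∩ {ω | ¬ |ω₁ (Lstar ω)| ≤ 1}) = 0 := by
      rcases mul_eq_zero.mp h0 with h | h
      · exact absurd h (ENNReal.inv_ne_zero.mpr hcT)
      · exact h
    rw [ae_iff]
    refine measure_mono_null ?_ hnull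
    intro ω hω
    simp only [Set.mem_setOf_eq, Classical.not_imp] at hω
    exact ⟨hω.1, hω.2⟩
  -- key conditioning lemma under μ
  have key : ∀ h : Ω → ℝ, StronglyMeasurable[MeasurableSpace.comap (fun ω => (Lstar ω, A ω)) inferInstance] h → Integrable (fun ω => h ω * R ω) μ →
      ∫ ω, h ω * R ω ∂μ = ∫ ω, h ω * η (Lstar ω) (A ω) ∂μ := by
    intro h hh hint
    have h1 : μ[h * R|MeasurableSpace.comap (fun ω => (Lstar ω, A ω)) inferInstance] =ᵐ[μ] h * μ[R|MeasurableSpace.comap (fun ω => (Lstar ω, A ω)) inferInstance] :=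
      condExp_mul_of_stronglyMeasurable_left hh (by exact hint) hRint
    calc ∫ ω, h ω * R ω ∂μ = ∫ ω, (μ[h * R|MeasurableSpace.comap (fun ω => (Lstar ω, A ω)) inferInstance]) ω ∂μ := (integral_condExp hm_le).symm
      _ = ∫ ω, h ω * (μ[R|MeasurableSpace.comap (fun ω => (Lstar ω, A ω)) inferInstance]) ω ∂μ := integral_congr_ae (h1.mono fun ω hω => by simpa using hω)
      _ = ∫ ω, h ω * η (Lstar ω) (A ω) ∂μ := by
          refine integral_congr_ae ?_
          filter_upwards [hηver] with ω hω
          rw [← hω]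
  -- pull-out step under the conditional measure
  have hwms : StronglyMeasurable[MeasurableSpace.comap Lstar inferInstance] (fun ω => (η (Lstar ω) 1)⁻¹) :=
    ((hη1meas.inv).comp hLms).stronglyMeasurable
  have mulstep : ∀ (G : Ω → ℝ) (v : (Fin p → ℝ) → ℝ), Integrable G (μ[|S]) →
      Integrable (fun ω => (η (Lstar ω) 1)⁻¹ * G ω) (μ[|S]) →
      ((fun ω => v (Lstar ω)) =ᵐ[μ[|S]] (μ[|S])[G|MeasurableSpace.comap Lstar inferInstance]) →
      ∫ ω, (η (Lstar ω) 1)⁻¹ * G ω ∂μ[|S]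
        = ∫ ω, (η (Lstar ω) 1)⁻¹ * v (Lstar ω) ∂μ[|S] := by
    intro G v hG hwG hv
    have hmul : (μ[|S])[(fun ω => (η (Lstar ω) 1)⁻¹) * G|MeasurableSpace.comap Lstar inferInstance]
        =ᵐ[μ[|S]] (fun ω => (η (Lstar ω) 1)⁻¹) * (μ[|S])[G|MeasurableSpace.comap Lstar inferInstance] :=
      condExp_mul_of_stronglyMeasurable_left hwms (by exact hwG) hG
    calc ∫ ω, (η (Lstar ω) 1)⁻¹ * G ω ∂μ[|S]
        = ∫ ω, ((μ[|S])[(fun ω => (η (Lstar ω) 1)⁻¹) * G|MeasurableSpace.comap Lstar inferInstance]) ω ∂μ[|S] :=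
          (integral_condExp hmstar_le).symm
      _ = ∫ ω, (η (Lstar ω) 1)⁻¹ * ((μ[|S])[G|MeasurableSpace.comap Lstar inferInstance]) ω ∂μ[|S] :=
          integral_congr_ae (hmul.mono fun ω hω => by simpa using hω)
      _ = ∫ ω, (η (Lstar ω) 1)⁻¹ * v (Lstar ω) ∂μ[|S] := by
          refine integral_congr_ae ?_
          filter_upwards [hv] with ω hω
          rw [hω]
  -- conversion between μ-integrals over S and conditional-measure integrals
  have htR : (μ S).toReal ≠ 0 := ENNReal.toReal_ne_zero.mpr ⟨hc0, hcT⟩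
  have hconv : ∀ f : Ω → ℝ, ∫ ω, Set.indicator S f ω ∂μ = (μ S).toReal * ∫ ω, f ω ∂μ[|S] := by
    intro f
    rw [integral_indicator hS, hcond_def, integral_smul_measure, ENNReal.toReal_inv,
      smul_eq_mul, ← mul_assoc, mul_inv_cancel₀ htR, one_mul]
  -- integrability of the nuisance integrands under the conditional measure
  have hG₁ : Integrable (fun ω => g (L ω) (A ω)) (μ[|S]) := by
    refine Integrable.mono' (integrable_const 1) hgmeas.aestronglyMeasurable ?_
    exact Filter.Eventually.of_forall fun ω => by simpa using hgbd ω
  have hwG₁ : Integrable (fun ω => (η (Lstar ω) 1)⁻¹ * g (L ω) (A ω)) (μ[|S]) := by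
    refine Integrable.mono' (integrable_const ε₀⁻¹)
      (((hη1meas.inv.comp hLstar).mul hgmeas).aestronglyMeasurable) ?_
    filter_upwards [hη1c] with ω hω
    have hpos : 0 < η (Lstar ω) 1 := lt_of_lt_of_le hε₀ hω
    rw [Real.norm_eq_abs, abs_mul, abs_inv, abs_of_pos hpos]
    calc (η (Lstar ω) 1)⁻¹ * |g (L ω) (A ω)| ≤ ε₀⁻¹ * 1 := by
          gcongr
          exact hgbd ω
      _ = ε₀⁻¹ := mul_one _
  have hDμ : Integrable (fun ω => Y ω - μ₀ (Lstar ω) (L ω)) μ :=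
    (hY2.sub hμ₀2).integrable one_le_two
  have hDc : Integrable (fun ω => Y ω - μ₀ (Lstar ω) (L ω)) (μ[|S]) := by
    have hle : (μ[|S]) ≤ (μ S)⁻¹ • μ := by
      rw [hcond_def]
      intro s
      simp only [Measure.smul_apply, smul_eq_mul]
      exact mul_le_mul_right (Measure.le_iff'.mp Measure.restrict_le_self s) _
    exact (hDμ.smul_measure (ENNReal.inv_ne_top.mpr hc0)).mono_measure hle
  have hG₂ : Integrable (fun ω => g (L ω) (A ω) * (Y ω - μ₀ (Lstar ω) (L ω))) (μ[|S]) := by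
    refine Integrable.mono' hDc.abs (hgmeas.mul hDmeas).aestronglyMeasurable ?_
    refine Filter.Eventually.of_forall fun ω => ?_
    rw [Real.norm_eq_abs, abs_mul]
    calc |g (L ω) (A ω)| * |Y ω - μ₀ (Lstar ω) (L ω)|
        ≤ 1 * |Y ω - μ₀ (Lstar ω) (L ω)| := by gcongr; exact hgbd ω
      _ = |Y ω - μ₀ (Lstar ω) (L ω)| := one_mul _
  have hwG₂ : Integrable
      (fun ω => (η (Lstar ω) 1)⁻¹ * (g (L ω) (A ω) * (Y ω - μ₀ (Lstar ω) (L ω)))) (μ[|S]) := by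
    refine Integrable.mono' (hDc.abs.const_mul ε₀⁻¹)
      ((hη1meas.inv.comp hLstar).mul (hgmeas.mul hDmeas)).aestronglyMeasurable ?_
    filter_upwards [hη1c] with ω hω
    have hpos : 0 < η (Lstar ω) 1 := lt_of_lt_of_le hε₀ hω
    rw [Real.norm_eq_abs, abs_mul, abs_inv, abs_of_pos hpos, abs_mul]
    have h1 : (η (Lstar ω) 1)⁻¹ ≤ ε₀⁻¹ := by gcongr
    calc (η (Lstar ω) 1)⁻¹ * (|g (L ω) (A ω)| * |Y ω - μ₀ (Lstar ω) (L ω)|)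
        ≤ ε₀⁻¹ * (1 * |Y ω - μ₀ (Lstar ω) (L ω)|) := by
          gcongr
          exact hgbd ω
      _ = ε₀⁻¹ * |Y ω - μ₀ (Lstar ω) (L ω)| := by rw [one_mul]
  -- integrability of ν ∘ Lstar on S under μ
  have hνc : Integrable (fun ω => ν (Lstar ω)) (μ[|S]) := integrable_condExp.congr hνver.symm
  have hνrestrict : Integrable (fun ω => ν (Lstar ω)) (μ.restrict S) := by
    rw [hcond_def] at hνc
    exact (integrable_smul_measure (ENNReal.inv_ne_zero.mpr hcT)
      (ENNReal.inv_ne_top.mpr hc0)).mp hνc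
  -- Goal 1
  have goal1 : ∫ ω, A ω * R ω * g (L ω) (A ω) / η (Lstar ω) 1 ∂μ
      = ∫ ω, A ω * ω₁ (Lstar ω) ∂μ := by
    have e1 : ∫ ω, A ω * R ω * g (L ω) (A ω) / η (Lstar ω) 1 ∂μ
        = ∫ ω, Set.indicator S (fun ω => (η (Lstar ω) 1)⁻¹ * g (L ω) (A ω)) ω ∂μ := by
      refine integral_congr_ae (Filter.Eventually.of_forall fun ω => ?_)
      by_cases hω : ω ∈ S
      · rw [Set.indicator_of_mem hω]
        obtain ⟨hA1, hR1⟩ := hω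
        simp [hA1, hR1, div_eq_inv_mul]
      · rw [Set.indicator_of_notMem hω]
        have h0 : A ω = 0 ∨ R ω = 0 := by
          rcases hA01 ω with h | h
          · exact Or.inl h
          rcases hR01 ω with h' | h'
          · exact Or.inr h'
          · exact absurd ⟨h, h'⟩ hω
        rcases h0 with h | h <;> simp [h]
    have e3 := mulstep (fun ω => g (L ω) (A ω)) ω₁ hG₁ hwG₁ hω₁ver
    have e5 : ∫ ω, Set.indicator S (fun ω => (η (Lstar ω) 1)⁻¹ * ω₁ (Lstar ω)) ω ∂μ
        = ∫ ω, (A ω * (ω₁ (Lstar ω) / η (Lstar ω) 1)) * R ω ∂μ := by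
      refine integral_congr_ae (Filter.Eventually.of_forall fun ω => ?_)
      by_cases hω : ω ∈ S
      · rw [Set.indicator_of_mem hω]
        obtain ⟨hA1, hR1⟩ := hω
        simp [hA1, hR1, div_eq_inv_mul]
      · rw [Set.indicator_of_notMem hω]
        have h0 : A ω = 0 ∨ R ω = 0 := by
          rcases hA01 ω with h | h
          · exact Or.inl h
          rcases hR01 ω with h' | h'
          · exact Or.inr h'
          · exact absurd ⟨h, h'⟩ hω
        rcases h0 with h | h <;> simp [h]
    have hh₁m : StronglyMeasurable[MeasurableSpace.comap (fun ω => (Lstar ω, A ω)) inferInstance] (fun ω => A ω * (ω₁ (Lstar ω) / η (Lstar ω) 1)) :=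
      (hAm.mul ((hω₁.comp hLm).div (hη1meas.comp hLm))).stronglyMeasurable
    have hint₁ : Integrable (fun ω => (A ω * (ω₁ (Lstar ω) / η (Lstar ω) 1)) * R ω) μ := by
      refine Integrable.mono' (integrable_const ε₀⁻¹)
        (((hA.mul ((hω₁.comp hLstar).div (hη1meas.comp hLstar))).mul hR).aestronglyMeasurable) ?_
      filter_upwards [hη1, hω₁S] with ω hη hb
      rcases hA01 ω with hA0 | hA1
      · simp [hA0]
        positivity
      rcases hR01 ω with hR0 | hR1
      · simp [hR0]
        positivity
      have hbd : |ω₁ (Lstar ω)| ≤ 1 := hb ⟨hA1, hR1⟩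
      have hpos : 0 < η (Lstar ω) 1 := lt_of_lt_of_le hε₀ hη
      rw [Real.norm_eq_abs, hA1, hR1, one_mul, mul_one, abs_div, abs_of_pos hpos]
      calc |ω₁ (Lstar ω)| / η (Lstar ω) 1 ≤ 1 / ε₀ := by
            gcongr
        _ = ε₀⁻¹ := one_div _
    have e6 := key (fun ω => A ω * (ω₁ (Lstar ω) / η (Lstar ω) 1)) hh₁m hint₁
    have e7 : ∫ ω, (A ω * (ω₁ (Lstar ω) / η (Lstar ω) 1)) * η (Lstar ω) (A ω) ∂μ
        = ∫ ω, A ω * ω₁ (Lstar ω) ∂μ := by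
      refine integral_congr_ae ?_
      filter_upwards [hη1] with ω hη
      rcases hA01 ω with h0 | h0
      · simp [h0]
      · have hne : η (Lstar ω) 1 ≠ 0 := (lt_of_lt_of_le hε₀ hη).ne'
        rw [h0, one_mul, one_mul, div_mul_cancel₀ _ hne]
    rw [e1, hconv, e3, ← hconv, e5, e6, e7]
  -- Goal 2
  have goal2 : ∫ ω, (A ω * R ω * g (L ω) (A ω) / η (Lstar ω) 1) * (Y ω - μ₀ (Lstar ω) (L ω)) ∂μ
      = ∫ ω, A ω * ν (Lstar ω) ∂μ := by
    have e1 : ∫ ω, (A ω * R ω * g (L ω) (A ω) / η (Lstar ω) 1) * (Y ω - μ₀ (Lstar ω) (L ω)) ∂μ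
        = ∫ ω, Set.indicator S
            (fun ω => (η (Lstar ω) 1)⁻¹ * (g (L ω) (A ω) * (Y ω - μ₀ (Lstar ω) (L ω)))) ω ∂μ := by
      refine integral_congr_ae (Filter.Eventually.of_forall fun ω => ?_)
      by_cases hω : ω ∈ S
      · rw [Set.indicator_of_mem hω]
        obtain ⟨hA1, hR1⟩ := hω
        simp only [hA1, hR1, one_mul, mul_one]
        rw [div_eq_inv_mul, mul_assoc]
      · rw [Set.indicator_of_notMem hω]
        have h0 : A ω = 0 ∨ R ω = 0 := by
          rcases hA01 ω with h | h
          · exact Or.inl h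
          rcases hR01 ω with h' | h'
          · exact Or.inr h'
          · exact absurd ⟨h, h'⟩ hω
        rcases h0 with h | h <;> simp [h]
    have e3 := mulstep (fun ω => g (L ω) (A ω) * (Y ω - μ₀ (Lstar ω) (L ω))) ν hG₂ hwG₂ hνver
    have e5 : ∫ ω, Set.indicator S (fun ω => (η (Lstar ω) 1)⁻¹ * ν (Lstar ω)) ω ∂μ
        = ∫ ω, (A ω * (ν (Lstar ω) / η (Lstar ω) 1)) * R ω ∂μ := by
      refine integral_congr_ae (Filter.Eventually.of_forall fun ω => ?_)
      by_cases hω : ω ∈ S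
      · rw [Set.indicator_of_mem hω]
        obtain ⟨hA1, hR1⟩ := hω
        simp [hA1, hR1, div_eq_inv_mul]
      · rw [Set.indicator_of_notMem hω]
        have h0 : A ω = 0 ∨ R ω = 0 := by
          rcases hA01 ω with h | h
          · exact Or.inl h
          rcases hR01 ω with h' | h'
          · exact Or.inr h'
          · exact absurd ⟨h, h'⟩ hω
        rcases h0 with h | h <;> simp [h]
    have hh₂m : StronglyMeasurable[MeasurableSpace.comap (fun ω => (Lstar ω, A ω)) inferInstance] (fun ω => A ω * (ν (Lstar ω) / η (Lstar ω) 1)) :=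
      (hAm.mul ((hν.comp hLm).div (hη1meas.comp hLm))).stronglyMeasurable
    have hint₂ : Integrable (fun ω => (A ω * (ν (Lstar ω) / η (Lstar ω) 1)) * R ω) μ := by
      have hM : Integrable (Set.indicator S (fun ω => ε₀⁻¹ * |ν (Lstar ω)|)) μ :=
        IntegrableOn.integrable_indicator (hνrestrict.abs.const_mul ε₀⁻¹) hS
      refine Integrable.mono' hM
        (((hA.mul ((hν.comp hLstar).div (hη1meas.comp hLstar))).mul hR).aestronglyMeasurable) ?_
      filter_upwards [hη1] with ω hη
      rcases hA01 ω with hA0 | hA1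
      · simp only [hA0, zero_mul, norm_zero]
        exact Set.indicator_apply_nonneg fun _ => by positivity
      rcases hR01 ω with hR0 | hR1
      · simp only [hR0, mul_zero, norm_zero]
        exact Set.indicator_apply_nonneg fun _ => by positivity
      have hω : ω ∈ S := ⟨hA1, hR1⟩
      have hpos : 0 < η (Lstar ω) 1 := lt_of_lt_of_le hε₀ hη
      rw [Set.indicator_of_mem hω, Real.norm_eq_abs, hA1, hR1, one_mul, mul_one, abs_div,
        abs_of_pos hpos]
      calc |ν (Lstar ω)| / η (Lstar ω) 1 ≤ |ν (Lstar ω)| / ε₀ := by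
            gcongr
        _ = ε₀⁻¹ * |ν (Lstar ω)| := div_eq_inv_mul _ _
    have e6 := key (fun ω => A ω * (ν (Lstar ω) / η (Lstar ω) 1)) hh₂m hint₂
    have e7 : ∫ ω, (A ω * (ν (Lstar ω) / η (Lstar ω) 1)) * η (Lstar ω) (A ω) ∂μ
        = ∫ ω, A ω * ν (Lstar ω) ∂μ := by
      refine integral_congr_ae ?_
      filter_upwards [hη1] with ω hη
      rcases hA01 ω with h0 | h0
      · simp [h0]
      · have hne : η (Lstar ω) 1 ≠ 0 := (lt_of_lt_of_le hε₀ hη).ne'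
        rw [h0, one_mul, one_mul, div_mul_cancel₀ _ hne]
    rw [e1, hconv, e3, ← hconv, e5, e6, e7]
  exact ⟨goal1, goal2⟩
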